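/- Let T_β(x) = βx mod 1 on [0,1] with β > 1 (with identification 0 ∼ 1), and suppose ζ ∈ [0,1] satisfies T_β^p(ζ) = ζ with p minimal and T_β^j(ζ) ≠ 0 for all j ≥ 0. Then for the sets U_n = B_{δ_n}(ζ) with δ_n → 0 and D_n = U_n ∩ T_β^{-p}(U_n^c), one has lim_{n→∞} m(D_n)/m(U_n) = 1 - β^{-p}, where m is Lebesgue measure. -/

import Mathlib

open MeasureTheory Filter Topology

/-- The β-transformation `x ↦ βx mod 1`. -/
noncomputable def betaMap (β : ℝ) (x : ℝ) : ℝ := Int.fract (β * x)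

lemma fract_add_small (a t : ℝ)
    (ht : |t| < min (Int.fract a) (1 - Int.fract a)) :
    Int.fract (a + t) = Int.fract a + t := by
  have h1 : -Int.fract a < t := by
    have := (abs_lt.mp ht).1
    have h2 := min_le_left (Int.fract a) (1 - Int.fract a)
    linarith
  have h2 : t < 1 - Int.fract a := by
    have := (abs_lt.mp ht).2
    have h3 := min_le_right (Int.fract a) (1 - Int.fract a)
    linarith
  have hfl : ⌊a + t⌋ = ⌊a⌋ := by
    rw [Int.floor_eq_iff]
    have hfa : Int.fract a = a - ⌊a⌋ := rfl
    refine ⟨by linarith, ?_⟩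
    push_cast
    linarith
  rw [Int.fract, Int.fract, hfl]
  ring

lemma local_affine (β : ℝ) (hβ : 1 < β) (ζ : ℝ)
    (horb : ∀ j, (betaMap β)^[j] ζ ≠ 0) (j : ℕ) :
    ∃ ε > 0, ∀ x, |x - ζ| < ε →
      (betaMap β)^[j] x = (betaMap β)^[j] ζ + β ^ j * (x - ζ) := by
  induction j with
  | zero => exact ⟨1, one_pos, fun x _ => by simp⟩
  | succ j ih =>
      obtain ⟨ε, hε, h⟩ := ih
      set a := β * (betaMap β)^[j] ζ with ha
      have hfa : Int.fract a ≠ 0 := by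
        have := horb (j + 1)
        rwa [Function.iterate_succ_apply'] at this
      have hfa0 : 0 < Int.fract a := lt_of_le_of_ne (Int.fract_nonneg a) (Ne.symm hfa)
      have hfa1 : Int.fract a < 1 := Int.fract_lt_one a
      set c := min (Int.fract a) (1 - Int.fract a) with hc
      have hcpos : 0 < c := lt_min hfa0 (by linarith)
      have hβ0 : (0:ℝ) < β := lt_trans one_pos hβ
      have hβp : (0:ℝ) < β ^ (j + 1) := pow_pos hβ0 _
      refine ⟨min ε (c / β ^ (j + 1)), lt_min hε (div_pos hcpos hβp), fun x hx => ?_⟩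
      have hx1 : |x - ζ| < ε := lt_of_lt_of_le hx (min_le_left _ _)
      have hx2 : |x - ζ| < c / β ^ (j + 1) := lt_of_lt_of_le hx (min_le_right _ _)
      have hj := h x hx1
      rw [Function.iterate_succ_apply', Function.iterate_succ_apply', hj]
      show Int.fract (β * ((betaMap β)^[j] ζ + β ^ j * (x - ζ)))
          = Int.fract a + β ^ (j + 1) * (x - ζ)
      have heq : β * ((betaMap β)^[j] ζ + β ^ j * (x - ζ))
          = a + β ^ (j + 1) * (x - ζ) := by rw [ha]; ring
      rw [heq, fract_add_small]
      rw [abs_mul, abs_of_pos hβp]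
      calc β ^ (j + 1) * |x - ζ| < β ^ (j + 1) * (c / β ^ (j + 1)) := by
            exact mul_lt_mul_of_pos_left hx2 hβp
        _ = c := by field_simp

theorem stmt_9 (β : ℝ) (hβ : 1 < β) (ζ : ℝ) (hζ : ζ ∈ Set.Icc (0:ℝ) 1)
    (p : ℕ) (hp : 0 < p) (hper : (betaMap β)^[p] ζ = ζ)
    (hmin : ∀ j, 0 < j → j < p → (betaMap β)^[j] ζ ≠ ζ)
    (horb : ∀ j, (betaMap β)^[j] ζ ≠ 0)
    (δ : ℕ → ℝ) (hδpos : ∀ n, 0 < δ n) (hδ : Tendsto δ atTop (nhds 0))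
    (U D : ℕ → Set ℝ)
    (hU : ∀ n, U n = Metric.ball ζ (δ n))
    (hD : ∀ n, D n = U n ∩ (fun x => (betaMap β)^[p] x) ⁻¹' (U n)ᶜ) :
    Tendsto (fun n => (volume (D n)).toReal / (volume (U n)).toReal) atTop
      (nhds (1 - (β ^ p)⁻¹)) := by
  obtain ⟨ε, hε, haff⟩ := local_affine β hβ ζ horb p
  have hβ0 : (0:ℝ) < β := lt_trans one_pos hβ
  have hβp : (0:ℝ) < β ^ p := pow_pos hβ0 _
  have hβp1 : (1:ℝ) < β ^ p := one_lt_pow₀ hβ hp.ne'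
  have hev : ∀ᶠ n in atTop, δ n < ε := hδ.eventually (gt_mem_nhds hε)
  refine Tendsto.congr' ?_ tendsto_const_nhds
  filter_upwards [hev] with n hn
  set r := δ n with hr
  have hrpos : 0 < r := hδpos n
  have hr'pos : 0 < r / β ^ p := div_pos hrpos hβp
  have hDn : D n = Metric.ball ζ r \ Metric.ball ζ (r / β ^ p) := by
    ext x
    simp only [hD, hU, Set.mem_inter_iff, Set.mem_preimage, Set.mem_compl_iff,
      Metric.mem_ball, Real.dist_eq, Set.mem_diff]
    constructor
    · rintro ⟨h1, h2⟩
      refine ⟨h1, fun h3 => h2 ?_⟩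
      rw [haff x (lt_trans h1 hn), hper]
      have : ζ + β ^ p * (x - ζ) - ζ = β ^ p * (x - ζ) := by ring
      rw [this, abs_mul, abs_of_pos hβp]
      calc β ^ p * |x - ζ| < β ^ p * (r / β ^ p) := mul_lt_mul_of_pos_left h3 hβp
        _ = r := by field_simp
    · rintro ⟨h1, h2⟩
      refine ⟨h1, fun h3 => h2 ?_⟩
      rw [haff x (lt_trans h1 hn), hper] at h3
      have he : ζ + β ^ p * (x - ζ) - ζ = β ^ p * (x - ζ) := by ring
      rw [he, abs_mul, abs_of_pos hβp] at h3
      rw [lt_div_iff₀ hβp]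
      linarith
  have hsub : Metric.ball ζ (r / β ^ p) ⊆ Metric.ball ζ r :=
    Metric.ball_subset_ball (by rw [div_le_iff₀ hβp]; nlinarith)
  have hvolD : (volume (D n)).toReal = 2 * r - 2 * (r / β ^ p) := by
    rw [hDn, measure_diff hsub measurableSet_ball.nullMeasurableSet
      (by rw [Real.volume_ball]; exact ENNReal.ofReal_ne_top),
      Real.volume_ball, Real.volume_ball,
      ← ENNReal.ofReal_sub _ (by positivity), ENNReal.toReal_ofReal (by
        have := div_lt_self hrpos hβp1; linarith)]
  have hvolU : (volume (U n)).toReal = 2 * r := by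
    rw [hU, Real.volume_ball, ENNReal.toReal_ofReal (by positivity)]
  rw [hvolD, hvolU]
  field_simp
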